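/- Suppose Assumption 1 holds and that, upon each exchange, the base station and the communicating agent update their respective variables via Algorithm 1. Then for every agent i and every time t≥0, the bound τ_i^A(t) − t + ω_i^A(t) ≤ T_i(t) − Δ_H holds. -/
import Mathlib


open scoped Classical ENNReal

noncomputable section

universe u

/-- A weighted graph environment `G(Q) = (Q, E)` with undirected edges and
positive edge weights. -/
structure Env (V : Type u) where
  adj : V → V → Prop
  adj_symm : ∀ u v, adj u v → adj v u
  adj_irrefl : ∀ v, ¬ adj v v
  w : V → V → ℝ
  w_pos : ∀ u v, adj u v → 0 < w u v
  w_symm : ∀ u v, w u v = w v u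

variable {V : Type u}

/-- `PathIn G S p` : `p` is a (nonempty) walk of `G` all of whose vertices lie in `S`. -/
def PathIn (G : Env V) (S : Set V) : List V → Prop
  | [] => False
  | [v] => v ∈ S
  | u :: v :: rest => u ∈ S ∧ G.adj u v ∧ PathIn G S (v :: rest)

/-- Total weighted length of a walk. -/
def pathLen (G : Env V) : List V → ℝ≥0∞
  | [] => 0
  | [_] => 0
  | u :: v :: rest => ENNReal.ofReal (G.w u v) + pathLen G (v :: rest)

/-- Weighted shortest-path distance between two vertices inside the subgraph of `G`
induced on `S` (`∞` if no connecting path inside `S` exists). -/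
def dIn (G : Env V) (S : Set V) (a b : V) : ℝ≥0∞ :=
  sInf {L : ℝ≥0∞ | ∃ p : List V, PathIn G S p ∧ p.head? = some a ∧
    p.getLast? = some b ∧ pathLen G p = L}

/-- Length of a shortest path inside the subgraph induced on `S` from `a` to the set `B`. -/
def dInSet (G : Env V) (S : Set V) (a : V) (B : Set V) : ℝ≥0∞ :=
  ⨅ b ∈ B, dIn G S a b

/-- A subset `S` is connected if its induced subgraph is connected. -/
def ConnIn (G : Env V) (S : Set V) : Prop :=
  ∀ a ∈ S, ∀ b ∈ S, ∃ p : List V, PathIn G S p ∧ p.head? = some a ∧ p.getLast? = some b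

/-- A vertex `k` is adjacent to a set `S`. -/
def AdjTo (G : Env V) (k : V) (S : Set V) : Prop :=
  k ∉ S ∧ ∃ v ∈ S, G.adj k v

/-- An `m`-covering of the vertex set. -/
def IsCovering {m : ℕ} (P : Fin m → Set V) : Prop :=
  (∀ v : V, ∃ i, v ∈ P i) ∧ ∀ i, (P i).Nonempty

/-- An `m`-partition of the vertex set. -/
def IsPartition {m : ℕ} (P : Fin m → Set V) : Prop :=
  IsCovering P ∧ ∀ i j : Fin m, i ≠ j → P i ∩ P j = ∅

/-- Conditions (1) and (2) of the additive-subset definition (together with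
connectivity of the candidate set `S`). -/
def AddCond {m : ℕ} (G : Env V) (s : Fin m → ℝ) (P : Fin m → Set V) (c : Fin m → V)
    (T : Fin m → ℝ) (i : Fin m) (Pid : Set V) (k : V) (S : Set V) : Prop :=
  ConnIn G S ∧ Pid ⊆ S ∧
    ∀ j : Fin m, j ≠ i → ∀ h ∈ S ∩ P j,
      T j = 0 ∧
      ENNReal.ofReal (1 / s i) * dIn G S h k < ENNReal.ofReal (1 / s j) * dIn G (P j) h (c j)

/-- `S` is *the* additive subset `P_i^add(k)` : the largest connected subset
satisfying conditions (1) and (2); it contains every subset satisfying them. -/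
def IsAddSet {m : ℕ} (G : Env V) (s : Fin m → ℝ) (P : Fin m → Set V) (c : Fin m → V)
    (T : Fin m → ℝ) (i : Fin m) (Pid : Set V) (k : V) (S : Set V) : Prop :=
  AddCond G s P c T i Pid k S ∧ ∀ S' : Set V, AddCond G s P c T i Pid k S' → S' ⊆ S

/-- The coverage cost `H(c, P, t)`. -/
def Hcost {m : ℕ} [Fintype V] (G : Env V) (s : Fin m → ℝ) (Φ : V → ℝ → ℝ)
    (c : Fin m → V) (P : Fin m → Set V) (t : ℝ) : ℝ≥0∞ :=
  ∑ k : V,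
    sInf {x : ℝ≥0∞ | ∃ i : Fin m, k ∈ P i ∧ x = ENNReal.ofReal (1 / s i) * dIn G (P i) k (c i)} *
      ENNReal.ofReal (Φ k t)

/-- The complete state maintained by the base station together with all the
agents' local variables. -/
structure CovState (V : Type u) (m : ℕ) where
  P : Fin m → Set V
  c : Fin m → V
  ID : V → Fin m
  T : Fin m → ℝ
  ω : Fin m → ℝ
  PA : Fin m → Set V
  cA : Fin m → V
  Ppd : Fin m → Set V
  τA : Fin m → ℝ
  ωA : Fin m → ℝ

namespace CovState

variable {m : ℕ}

/-- `P_i^ID`, the set of vertices whose identifier equals `i`. -/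
def Pid (σ : CovState V m) (i : Fin m) : Set V := {k | σ.ID k = i}

/-- The local likelihood function `Φ_i^A`. -/
def ΦA (σ : CovState V m) (Φ : V → ℝ → ℝ) (i : Fin m) (k : V) (t : ℝ) : ℝ :=
  if k ∈ σ.PA i ∧ (σ.τA i ≤ t - σ.ωA i ∨ k ∉ σ.Ppd i) then Φ k t else 0

/-- The prohibited region `Proh_i(t)`. -/
def Proh (σ : CovState V m) (i : Fin m) (t : ℝ) : Set V :=
  {k ∈ σ.PA i | t - σ.ωA i < σ.τA i ∧ k ∈ σ.Ppd i}

/-- Continuous (flow) evolution of the state for `δ` time units: only the timers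
change, each decreasing at unit rate until reaching `0`. -/
def decay (σ : CovState V m) (δ : ℝ) : CovState V m :=
  { σ with T := fun i => max (σ.T i - δ) 0 }

end CovState

/-- The trivial branch of Algorithm 1 (`T_i > 0` and `P_i^* = P_i`): only the
timing variables of the communicating agent are touched. -/
def NoopUpdate {m : ℕ} (i : Fin m) (t0 : ℝ) (σ σ' : CovState V m) : Prop :=
  σ' = { σ with τA := Function.update σ.τA i (σ.τA i - t0 + σ.ω i),
                ωA := Function.update σ.ωA i t0,
                ω := Function.update σ.ω i t0 }

/-- The main branch of Algorithm 1 (together with the timer update, Algorithm 2),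
executed upon an exchange between the base station and agent `i` at time `t0`. -/
def FullUpdate {m : ℕ} [Fintype V] (G : Env V) (s : Fin m → ℝ) (Φ : V → ℝ → ℝ)
    (Δbar ΔH : ℝ) (i : Fin m) (t0 : ℝ) (σ σ' : CovState V m) : Prop :=
  ∃ (cstar : V) (Pstar : Set V),
    -- `(cstar, Pstar)` is one of the candidate configurations:
    ((cstar = σ.c i ∧ Pstar = σ.Pid i) ∨
      (cstar ∈ σ.Pid i ∧ IsAddSet G s σ.P σ.c σ.T i (σ.Pid i) cstar Pstar)) ∧
    -- and it minimizes the cost `H` among all candidate configurations: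
    (∀ (k : V) (S : Set V),
      ((k = σ.c i ∧ S = σ.Pid i) ∨
        (k ∈ σ.Pid i ∧ IsAddSet G s σ.P σ.c σ.T i (σ.Pid i) k S)) →
      Hcost G s Φ (Function.update σ.c i cstar) (Function.update σ.P i Pstar) t0 ≤
        Hcost G s Φ (Function.update σ.c i k) (Function.update σ.P i S) t0) ∧
    σ'.P = Function.update σ.P i Pstar ∧
    σ'.PA = Function.update σ.PA i Pstar ∧
    σ'.c = Function.update σ.c i cstar ∧
    σ'.cA = Function.update σ.cA i cstar ∧
    σ'.Ppd = Function.update σ.Ppd i (Pstar \ σ.Pid i) ∧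
    σ'.ω = Function.update σ.ω i t0 ∧
    σ'.ωA = Function.update σ.ωA i t0 ∧
    σ'.ID = (fun k => if k ∈ Pstar then i else σ.ID k) ∧
    (∀ j : Fin m, j ≠ i → (σ.P j ∩ Pstar).Nonempty → σ'.T j = σ.ω j + Δbar - t0) ∧
    (∀ j : Fin m, j ≠ i → ¬(σ.P j ∩ Pstar).Nonempty → σ'.T j = σ.T j) ∧
    -- `T_i := Δ_max^Bf + Δ_H`, where `Δ_max^Bf` is as in Algorithm 2 (max ∅ := 0):
    σ'.T i =
      max
        (sSup {x : ℝ | ∃ k ∈ σ.P i \ Pstar,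
          x = (1 / s i) * (dInSet G (σ.P i) k (Pstar \ (Pstar \ σ.Pid i))).toReal})
        (sSup {x : ℝ | ∃ j : Fin m, j ≠ i ∧ (σ.P j ∩ Pstar).Nonempty ∧
          x = σ.ω j + Δbar +
            sSup {y : ℝ | ∃ k ∈ σ.P j ∩ Pstar,
              y = (1 / s j) * (dInSet G (σ.P j) k (σ.P j \ Pstar)).toReal} - t0}) + ΔH ∧
    -- `τ_i^A := Δ_max^Bf`:
    σ'.τA = Function.update σ.τA i (σ'.T i - ΔH)

/-- The one-to-base-station update of Algorithm 1 performed at time `t0` upon an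
exchange with agent `i`; `σ` is the state just before and `σ'` just after. -/
def UpdateAt {m : ℕ} [Fintype V] (G : Env V) (s : Fin m → ℝ) (Φ : V → ℝ → ℝ)
    (Δbar ΔH : ℝ) (i : Fin m) (t0 : ℝ) (σ σ' : CovState V m) : Prop :=
  (0 < σ.T i ∧ σ.Pid i = σ.P i ∧ NoopUpdate i t0 σ σ') ∨
  (¬(0 < σ.T i ∧ σ.Pid i = σ.P i) ∧ FullUpdate G s Φ Δbar ΔH i t0 σ σ')

/-- Assumption 1 (initialization). -/
def InitOK {m : ℕ} (G : Env V) (ΔH : ℝ) (σ : CovState V m) : Prop :=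
  IsPartition σ.P ∧ (∀ i, ConnIn G (σ.P i)) ∧
    ∀ i : Fin m,
      σ.PA i = σ.P i ∧ σ.P i = σ.Pid i ∧ σ.cA i = σ.c i ∧ σ.c i ∈ σ.P i ∧
      σ.Ppd i = ∅ ∧ σ.T i = 0 ∧ σ.ω i = 0 ∧ σ.ωA i = 0 ∧ σ.τA i = -ΔH

/-- An execution of the asynchronous one-to-base-station coverage scheme:
exchanges occur at the times `etime n` with the agents `eagent n`, successive
exchanges are separated by at least `Δlow`, each agent communicates at least
every `Δ̄` time units, the state is initialized according to Assumption 1,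
flows (only the timers decay) in between exchanges, and jumps according to
Algorithm 1 at each exchange. -/
structure Execution [Fintype V] (G : Env V) (m : ℕ) (s : Fin m → ℝ) (Φ : V → ℝ → ℝ)
    (Δlow Δbar ΔH : ℝ) where
  etime : ℕ → ℝ
  eagent : ℕ → Fin m
  state : ℝ → CovState V m
  s_pos : ∀ i, 0 < s i
  Δlow_pos : 0 < Δlow
  Δbar_pos : 0 < Δbar
  ΔH_pos : 0 < ΔH
  Φ_nonneg : ∀ k t, 0 ≤ Φ k t
  Φ_sum : ∀ t : ℝ, ∑ k : V, Φ k t = 1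
  etime_pos : ∀ n, 0 < etime n
  etime_sep : ∀ n, etime n + Δlow ≤ etime (n + 1)
  persistent : ∀ (i : Fin m) (t : ℝ), 0 ≤ t →
    ∃ n, eagent n = i ∧ t ≤ etime n ∧ etime n ≤ t + Δbar
  init : InitOK G ΔH (state 0)
  flow : ∀ t₁ t₂ : ℝ, 0 ≤ t₁ → t₁ ≤ t₂ →
    (∀ n, ¬(t₁ < etime n ∧ etime n ≤ t₂)) →
    state t₂ = (state t₁).decay (t₂ - t₁)
  jump : ∀ (n : ℕ) (t₁ : ℝ), 0 ≤ t₁ → t₁ < etime n →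
    (∀ p, ¬(t₁ < etime p ∧ etime p < etime n)) →
    UpdateAt G s Φ Δbar ΔH (eagent n) (etime n)
      ((state t₁).decay (etime n - t₁)) (state (etime n))

/-- Twice the sum, over the edges of `G`, of the graph distance between the
endpoints, halved (i.e. the sum over unordered edges). -/
def edgeSum [Fintype V] (G : Env V) : ℝ :=
  (1 / 2) * ∑ p : V × V, if G.adj p.1 p.2 then (dIn G Set.univ p.1 p.2).toReal else 0

/-- `d̄ := max_i (1/s_i) · Σ_{{k1,k2} ∈ E} d_Q(k1,k2)`. -/
def dbar {m : ℕ} [Fintype V] (G : Env V) (s : Fin m → ℝ) : ℝ :=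
  sSup {x : ℝ | ∃ i : Fin m, x = (1 / s i) * edgeSum G}

end

section AuxTiming

variable {V : Type*} [Fintype V] [DecidableEq V] {m : ℕ}
  {G : Env V} {s : Fin m → ℝ} {Φ : V → ℝ → ℝ} {Δlow Δbar ΔH : ℝ}

@[simp] lemma decay_P (σ : CovState V m) (δ : ℝ) : (σ.decay δ).P = σ.P := rfl
@[simp] lemma decay_ID (σ : CovState V m) (δ : ℝ) : (σ.decay δ).ID = σ.ID := rfl
@[simp] lemma decay_τA (σ : CovState V m) (δ : ℝ) : (σ.decay δ).τA = σ.τA := rfl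
@[simp] lemma decay_ωA (σ : CovState V m) (δ : ℝ) : (σ.decay δ).ωA = σ.ωA := rfl
@[simp] lemma decay_ω (σ : CovState V m) (δ : ℝ) : (σ.decay δ).ω = σ.ω := rfl
@[simp] lemma decay_T (σ : CovState V m) (δ : ℝ) (j : Fin m) :
    (σ.decay δ).T j = max (σ.T j - δ) 0 := rfl

/-- The inductive invariant. -/
def InvP (E : Execution G m s Φ Δlow Δbar ΔH) (σ : CovState V m) (t : ℝ) : Prop :=
  (∀ j, σ.ωA j = σ.ω j) ∧
  (∀ j, 0 ≤ σ.ω j) ∧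
  (∀ j, σ.τA j - t + σ.ωA j ≤ σ.T j - ΔH) ∧
  (∀ j, (∃ k ∈ σ.P j, σ.ID k ≠ j) → σ.τA j - t + σ.ωA j ≤ -ΔH) ∧
  (∀ (j : Fin m) (n : ℕ), E.eagent n = j → E.etime n ≤ t → E.etime n ≤ σ.ω j)

lemma etime_strictMono (E : Execution G m s Φ Δlow Δbar ΔH) : StrictMono E.etime :=
  strictMono_nat_of_lt_succ fun n =>
    lt_of_lt_of_le (by linarith [E.Δlow_pos]) (E.etime_sep n)

lemma invP_init (E : Execution G m s Φ Δlow Δbar ΔH) : InvP E (E.state 0) 0 := by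
  obtain ⟨_, _, hinit⟩ := E.init
  refine ⟨fun j => ?_, fun j => ?_, fun j => ?_, fun j hj => ?_, fun j n hn hle => ?_⟩
  · rw [(hinit j).2.2.2.2.2.2.2.1, (hinit j).2.2.2.2.2.2.1]
  · rw [(hinit j).2.2.2.2.2.2.1]
  · rw [(hinit j).2.2.2.2.2.2.2.1, (hinit j).2.2.2.2.2.2.2.2,
      (hinit j).2.2.2.2.2.1]
    linarith
  · exfalso
    obtain ⟨k, hk, hkid⟩ := hj
    rw [(hinit j).2.1] at hk
    exact hkid hk
  · exact absurd (lt_of_lt_of_le (E.etime_pos n) hle) (lt_irrefl 0)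

lemma invP_decay (E : Execution G m s Φ Δlow Δbar ΔH) {σ : CovState V m} {t δ : ℝ}
    (h : InvP E σ t) (hδ : 0 ≤ δ)
    (hgap : ∀ n, ¬(t < E.etime n ∧ E.etime n ≤ t + δ)) :
    InvP E (σ.decay δ) (t + δ) := by
  obtain ⟨h1, h2, h3, h4, h5⟩ := h
  refine ⟨fun j => ?_, fun j => ?_, fun j => ?_, fun j hj => ?_, fun j n hn hle => ?_⟩
  · simpa using h1 j
  · simpa using h2 j
  · have := h3 j
    have := le_max_left (σ.T j - δ) 0
    simp only [decay_τA, decay_ωA, decay_T]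
    linarith
  · have := h4 j (by simpa using hj)
    simp only [decay_τA, decay_ωA]
    linarith
  · have hle' : E.etime n ≤ t := by
      by_contra hc
      push_neg at hc
      exact hgap n ⟨hc, hle⟩
    simpa using h5 j n hn hle'

lemma invP_jump (E : Execution G m s Φ Δlow Δbar ΔH) (n : ℕ) (t₁ : ℝ)
    (ht₁ : 0 ≤ t₁) (hlt : t₁ < E.etime n)
    (hgap : ∀ p, ¬(t₁ < E.etime p ∧ E.etime p < E.etime n))
    (hI : InvP E (E.state t₁) t₁) :
    InvP E (E.state (E.etime n)) (E.etime n) := by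
  obtain ⟨h1, h2, h3, h4, h5⟩ := hI
  set t0 := E.etime n with ht0
  set i := E.eagent n with hi
  set σ := (E.state t₁).decay (t0 - t₁) with hσdef
  have hupd : UpdateAt G s Φ Δbar ΔH i t0 σ (E.state t0) := E.jump n t₁ ht₁ hlt hgap
  have ht0pos : 0 < t0 := E.etime_pos n
  have hinj : Function.Injective E.etime := (etime_strictMono E).injective
  -- pre-state facts at time t0
  have p1 : ∀ j, σ.ωA j = σ.ω j := by simpa [hσdef] using h1
  have p2 : ∀ j, 0 ≤ σ.ω j := by simpa [hσdef] using h2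
  have p3 : ∀ j, σ.τA j - t0 + σ.ωA j ≤ σ.T j - ΔH := by
    intro j
    have := h3 j
    have := le_max_left ((E.state t₁).T j - (t0 - t₁)) 0
    simp only [hσdef, decay_τA, decay_ωA, decay_T]
    linarith
  have p4 : ∀ j, (∃ k ∈ σ.P j, σ.ID k ≠ j) → σ.τA j - t0 + σ.ωA j ≤ -ΔH := by
    intro j hj
    have := h4 j (by simpa [hσdef] using hj)
    simp only [hσdef, decay_τA, decay_ωA]
    linarith
  have p5 : ∀ (j : Fin m) (p : ℕ), E.eagent p = j → E.etime p < t0 → E.etime p ≤ σ.ω j := by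
    intro j p hp hplt
    have hle : E.etime p ≤ t₁ := by
      by_contra hc
      push_neg at hc
      exact hgap p ⟨hc, hplt⟩
    simpa [hσdef] using h5 j p hp hle
  have hωlow : ∀ j, j ≠ i → t0 - Δbar ≤ σ.ω j := by
    intro j hj
    rcases le_or_gt (t0 - Δbar) 0 with hcase | hcase
    · exact hcase.trans (p2 j)
    · obtain ⟨p, hp1, hp2, hp3⟩ := E.persistent j (t0 - Δbar) hcase.le
      have hne : E.etime p ≠ t0 := by
        intro he
        have hpn : p = n := hinj he
        exact hj (by rw [← hp1, hpn])
      have hplt : E.etime p < t0 := lt_of_le_of_ne (by linarith) hne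
      exact hp2.trans (p5 j p hp1 hplt)
  rcases hupd with ⟨hTpos, hPid, hnoop⟩ | ⟨_, hfull⟩
  · -- Noop update
    rw [NoopUpdate] at hnoop
    rw [hnoop]
    refine ⟨fun j => ?_, fun j => ?_, fun j => ?_, fun j hj => ?_, fun j p hp hple => ?_⟩
    · by_cases hji : j = i
      · subst hji; simp
      · simp only [Function.update_of_ne hji]
        exact p1 j
    · by_cases hji : j = i
      · subst hji; simp; linarith
      · simp only [Function.update_of_ne hji]
        exact p2 j
    · by_cases hji : j = i
      · subst hji
        simp only [Function.update_self]
        have := p3 i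
        have := p1 i
        linarith
      · simp only [Function.update_of_ne hji]
        exact p3 j
    · by_cases hji : j = i
      · subst hji
        exfalso
        obtain ⟨k, hk, hkid⟩ := hj
        have : k ∈ σ.Pid i := by rw [hPid]; exact hk
        exact hkid this
      · simp only [Function.update_of_ne hji]
        exact p4 j hj
    · by_cases hji : j = i
      · subst hji; simp only [Function.update_self]; exact hple
      · simp only [Function.update_of_ne hji]
        rcases lt_or_eq_of_le hple with hl | he
        · exact p5 j p hp hl
        · exfalso
          have hpn : p = n := hinj he
          exact hji (by rw [← hp, hpn])
  · -- Full update
    obtain ⟨cstar, Pstar, hbr, _, hP, hPA, hc, hcA, hPpd, hω, hωA, hID, hTre, hTkeep, hTi, hτA⟩ :=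
      hfull
    have hsteal : ∀ j, j ≠ i → (σ.P j ∩ Pstar).Nonempty →
        σ.τA j - t0 + σ.ωA j ≤ -ΔH := by
      intro j hji hne
      obtain ⟨k, hkP, hkS⟩ := hne
      rcases hbr with ⟨_, hPs⟩ | ⟨_, hAdd⟩
      · have hkid : σ.ID k = i := by rw [hPs] at hkS; exact hkS
        refine p4 j ⟨k, hkP, ?_⟩
        rw [hkid]
        exact fun h => hji h.symm
      · obtain ⟨⟨_, _, hcond⟩, _⟩ := hAdd
        have hTj := (hcond j hji k ⟨hkS, hkP⟩).1
        have := p3 j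
        linarith
    refine ⟨fun j => ?_, fun j => ?_, fun j => ?_, fun j hj => ?_, fun j p hp hple => ?_⟩
    · rw [hωA, hω]
      by_cases hji : j = i
      · subst hji; simp
      · simp only [Function.update_of_ne hji]
        exact p1 j
    · rw [hω]
      by_cases hji : j = i
      · subst hji; simp; linarith
      · simp only [Function.update_of_ne hji]
        exact p2 j
    · by_cases hji : j = i
      · subst hji
        rw [hτA, hωA]
        simp only [Function.update_self]
        linarith
      · rw [hτA, hωA]
        simp only [Function.update_of_ne hji]
        by_cases hne : (σ.P j ∩ Pstar).Nonempty
        · rw [hTre j hji hne]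
          have := hsteal j hji hne
          have := hωlow j hji
          linarith
        · rw [hTkeep j hji hne]
          exact p3 j
    · obtain ⟨k, hkP, hkid⟩ := hj
      rw [hP] at hkP
      by_cases hji : j = i
      · subst hji
        rw [Function.update_self] at hkP
        exact absurd (by rw [hID]; simp [hkP]) hkid
      · rw [hτA, hωA]
        simp only [Function.update_of_ne hji]
        rw [Function.update_of_ne hji] at hkP
        by_cases hkS : k ∈ Pstar
        · exact hsteal j hji ⟨k, hkP, hkS⟩
        · have hEq : (E.state t0).ID k = σ.ID k := by rw [hID]; simp [hkS]
          rw [hEq] at hkid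
          exact p4 j ⟨k, hkP, hkid⟩
    · rw [hω]
      by_cases hji : j = i
      · subst hji; simp only [Function.update_self]; exact hple
      · simp only [Function.update_of_ne hji]
        rcases lt_or_eq_of_le hple with hl | he
        · exact p5 j p hp hl
        · exfalso
          have hpn : p = n := hinj he
          exact hji (by rw [← hp, hpn])

lemma invP_at_etime (E : Execution G m s Φ Δlow Δbar ΔH) :
    ∀ n, InvP E (E.state (E.etime n)) (E.etime n) := by
  intro n
  induction n with
  | zero =>
      refine invP_jump E 0 0 le_rfl (E.etime_pos 0) (fun p hp => ?_) (invP_init E)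
      exact absurd hp.2 (not_lt.2 ((etime_strictMono E).monotone (Nat.zero_le p)))
  | succ k ih =>
      refine invP_jump E (k + 1) (E.etime k) (E.etime_pos k).le
        (etime_strictMono E (Nat.lt_succ_self k)) (fun p hp => ?_) ih
      have hkp : k < p := by
        by_contra hcon
        push_neg at hcon
        exact absurd ((etime_strictMono E).monotone hcon) (not_le.2 hp.1)
      exact absurd ((etime_strictMono E).monotone hkp) (not_le.2 hp.2)

lemma invP_all (E : Execution G m s Φ Δlow Δbar ΔH) :
    ∀ t : ℝ, 0 ≤ t → InvP E (E.state t) t := by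
  intro t ht
  classical
  by_cases hex : ∃ p, E.etime p ≤ t
  · have hlb : ∀ p : ℕ, E.etime 0 + p * Δlow ≤ E.etime p := by
      intro p
      induction p with
      | zero => simp
      | succ q ihq =>
          have := E.etime_sep q
          push_cast
          push_cast at ihq
          linarith
    have hbound : ∀ p : ℕ, E.etime p ≤ t → p ≤ ⌈t / Δlow⌉₊ := by
      intro p hp
      have h0 : (0 : ℝ) < E.etime 0 := E.etime_pos 0
      have hplb := hlb p
      have hpd : (p : ℝ) * Δlow ≤ t := by linarith
      have hdiv : (p : ℝ) ≤ t / Δlow := by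
        rw [le_div_iff₀ E.Δlow_pos]
        exact hpd
      have := hdiv.trans (Nat.le_ceil (t / Δlow))
      exact_mod_cast this
    obtain ⟨p₀, hp₀⟩ := hex
    set S : Finset ℕ := (Finset.range (⌈t / Δlow⌉₊ + 1)).filter (fun p => E.etime p ≤ t)
      with hS
    have hmemS : ∀ p, E.etime p ≤ t → p ∈ S := by
      intro p hp
      rw [hS, Finset.mem_filter, Finset.mem_range]
      exact ⟨Nat.lt_succ_of_le (hbound p hp), hp⟩
    have hSne : S.Nonempty := ⟨p₀, hmemS p₀ hp₀⟩
    set N := S.max' hSne with hN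
    have hNle : E.etime N ≤ t := (Finset.mem_filter.1 (S.max'_mem hSne)).2
    have hflow : E.state t = (E.state (E.etime N)).decay (t - E.etime N) := by
      refine E.flow (E.etime N) t (E.etime_pos N).le hNle (fun p hp => ?_)
      have : p ≤ N := S.le_max' p (hmemS p hp.2)
      exact absurd ((etime_strictMono E).monotone this) (not_le.2 hp.1)
    have key := invP_decay E (invP_at_etime E N) (by linarith) (t := E.etime N)
      (δ := t - E.etime N) ?_
    · rw [hflow]
      have harith : E.etime N + (t - E.etime N) = t := by ring
      rwa [harith] at key
    · intro p hp
      have hple : E.etime p ≤ t := by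
        have : E.etime N + (t - E.etime N) = t := by ring
        linarith [hp.2, this]
      have : p ≤ N := S.le_max' p (hmemS p hple)
      exact absurd ((etime_strictMono E).monotone this) (not_le.2 hp.1)
  · push_neg at hex
    have hflow : E.state t = (E.state 0).decay (t - 0) :=
      E.flow 0 t le_rfl ht (fun p hp => absurd hp.2 (not_le.2 (hex p)))
    have key := invP_decay E (invP_init E) (t := 0) (δ := t) ht ?_
    · rw [hflow]
      simpa using key
    · intro p hp
      exact absurd hp.2 (not_le.2 (by simpa using hex p))

end AuxTiming

/-- timing-variable bound.  Under Assumption 1 and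
Algorithm 1 updates, for every agent `i` and every time `t ≥ 0`,
`τ_i^A(t) − t + ω_i^A(t) ≤ T_i(t) − Δ_H`. -/
theorem timing_variable_bound {V : Type*} [Fintype V] [DecidableEq V] {m : ℕ}
    (G : Env V) (s : Fin m → ℝ) (Φ : V → ℝ → ℝ) (Δlow Δbar ΔH : ℝ)
    (E : Execution G m s Φ Δlow Δbar ΔH) :
    ∀ (i : Fin m) (t : ℝ), 0 ≤ t →
      (E.state t).τA i - t + (E.state t).ωA i ≤ (E.state t).T i - ΔH := by
  intro i t ht
  exact (invP_all E t ht).2.2.1 i
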